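/- Let T > 0, n ≥ 1 a natural number, α ∈ (n−1, n), and let f : ℝ → ℝ be an n-times continuously differentiable T-periodic function. Define the Caputo fractional derivative ᶜD^α f(t) = (1/Γ(n−α)) ∫₀ᵗ (t−s)^{n−α−1} f^{(n)}(s) ds for t > 0. If ᶜD^α f is bounded on (0,∞), then ᶜD^α f is asymptotically T-periodic: there exists a continuous T-periodic function Φ : ℝ → ℝ such that lim_{t→+∞} [ᶜD^α f(t) − Φ(t)] = 0. -/

import Mathlib

open MeasureTheory intervalIntegral Filter Set

lemma aux_periodic_bounded {h : ℝ → ℝ} {T : ℝ} (hc : Continuous h)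
    (hp : Function.Periodic h T) (hT : 0 < T) : ∃ C : ℝ, 0 ≤ C ∧ ∀ x, |h x| ≤ C := by
  obtain ⟨C, hC⟩ := (isCompact_Icc (a := (0:ℝ)) (b := T)).exists_bound_of_continuousOn
    hc.continuousOn
  refine ⟨max C 0, le_max_right _ _, fun x => ?_⟩
  obtain ⟨y, hy, hxy⟩ := hp.exists_mem_Ico₀ hT x
  rw [hxy]
  have := hC y ⟨hy.1, hy.2.le⟩
  rw [Real.norm_eq_abs] at this
  exact this.trans (le_max_left _ _)

lemma aux_periodic_deriv {h : ℝ → ℝ} {T : ℝ} (hp : Function.Periodic h T) :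
    Function.Periodic (deriv h) T := by
  intro x
  have h1 : deriv (fun y => h (y + T)) x = deriv h (x + T) := deriv_comp_add_const h T x
  rw [← h1, show (fun y => h (y + T)) = h from funext hp]

lemma aux_periodic_iteratedDeriv {h : ℝ → ℝ} {T : ℝ} (hp : Function.Periodic h T) (k : ℕ) :
    Function.Periodic (iteratedDeriv k h) T := by
  induction k with
  | zero => simpa using hp
  | succ k ih => rw [iteratedDeriv_succ]; exact aux_periodic_deriv ih

/-- If `f` is an `n`-times continuously differentiable `T`-periodic function,
`α ∈ (n-1, n)`, and the Caputo fractional derivative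
`ᶜD^α f (t) = (1/Γ(n-α)) ∫₀ᵗ (t-s)^{n-α-1} f⁽ⁿ⁾(s) ds` is bounded on `(0,∞)`,
then `ᶜD^α f` is asymptotically `T`-periodic: there is a continuous `T`-periodic `Φ`
with `ᶜD^α f (t) - Φ(t) → 0` as `t → +∞`. -/
theorem caputo_derivative_asymptotically_periodic (T : ℝ) (hT : 0 < T)
    (n : ℕ) (hn : 1 ≤ n)
    (α : ℝ) (hα : α ∈ Set.Ioo ((n : ℝ) - 1) (n : ℝ))
    (f : ℝ → ℝ) (hf : ContDiff ℝ n f) (hper : Function.Periodic f T)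
    (cD : ℝ → ℝ)
    (hcD : ∀ t : ℝ, cD t =
      (1 / Real.Gamma ((n : ℝ) - α)) *
        ∫ s in (0 : ℝ)..t, (t - s) ^ ((n : ℝ) - α - 1) * iteratedDeriv n f s)
    (hbdd : ∃ M : ℝ, ∀ t ∈ Ioi (0 : ℝ), |cD t| ≤ M) :
    ∃ Φ : ℝ → ℝ, Continuous Φ ∧ Function.Periodic Φ T ∧
      Tendsto (fun t : ℝ => cD t - Φ t) atTop (nhds 0) := by
  obtain ⟨M, hM⟩ := hbdd
  obtain ⟨hα1, hα2⟩ := hα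
  set β : ℝ := (n : ℝ) - α - 1 with hβdef
  have hβ0 : (-1 : ℝ) < β := by rw [hβdef]; linarith
  have hβneg : β < 0 := by rw [hβdef]; linarith
  have hβ1 : 0 < β + 1 := by linarith
  have hβne : β ≠ 0 := ne_of_lt hβneg
  set γ : ℝ := Real.Gamma ((n : ℝ) - α) with hγdef
  have hγ : 0 < γ := Real.Gamma_pos_of_pos (by linarith)
  have hγne : γ ≠ 0 := ne_of_gt hγ
  set g : ℝ → ℝ := iteratedDeriv n f with hgdef
  have hg_cont : Continuous g := hf.continuous_iteratedDeriv n (by exact_mod_cast le_rfl)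
  have hg_per : Function.Periodic g T := aux_periodic_iteratedDeriv hper n
  set m : ℝ := (∫ s in (0:ℝ)..T, g s) / T with hmdef
  set p : ℝ → ℝ := fun s => g s - m with hpdef
  have hp_cont : Continuous p := hg_cont.sub continuous_const
  have hp_per : Function.Periodic p T := fun x => by simp only [hpdef, hg_per x]
  obtain ⟨Cp, hCp0, hCp⟩ := aux_periodic_bounded hp_cont hp_per hT
  have hp_int : ∀ a b : ℝ, IntervalIntegrable p volume a b :=
    fun a b => hp_cont.intervalIntegrable a b
  set P : ℝ → ℝ := fun s => ∫ u in (0:ℝ)..s, p u with hPdef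
  have hP_deriv : ∀ s, HasDerivAt P (p s) s := fun s =>
    intervalIntegral.integral_hasDerivAt_right (hp_int 0 s)
      (hp_cont.stronglyMeasurableAtFilter _ _) hp_cont.continuousAt
  have hP_cont : Continuous P := continuous_iff_continuousAt.2 fun s => (hP_deriv s).continuousAt
  have hpT : ∫ s in (0:ℝ)..T, p s = 0 := by
    have h1 : ∫ s in (0:ℝ)..T, p s = (∫ s in (0:ℝ)..T, g s) - ∫ s in (0:ℝ)..T, (m : ℝ) :=
      intervalIntegral.integral_sub (hg_cont.intervalIntegrable _ _) intervalIntegrable_const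
    rw [h1, intervalIntegral.integral_const, smul_eq_mul, sub_zero, hmdef]
    field_simp
    ring
  have hP_per : Function.Periodic P T := by
    intro s
    have h1 : ∫ u in (0:ℝ)..(s+T), p u = (∫ u in (0:ℝ)..s, p u) + ∫ u in s..(s+T), p u :=
      (intervalIntegral.integral_add_adjacent_intervals (hp_int 0 s) (hp_int s (s+T))).symm
    have h2 : ∫ u in s..(s+T), p u = ∫ u in (0:ℝ)..(0+T), p u := hp_per.intervalIntegral_add_eq s 0
    simp only [hPdef]
    rw [h1, h2, zero_add, hpT, add_zero]
  obtain ⟨C, hC0, hC⟩ := aux_periodic_bounded hP_cont hP_per hT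
  -- basic integrability facts
  have hrpow_int : ∀ a b : ℝ, IntervalIntegrable (fun u : ℝ => u ^ β) volume a b :=
    fun a b => intervalIntegral.intervalIntegrable_rpow' hβ0
  have hmix_int : ∀ (t a b : ℝ), IntervalIntegrable (fun u => u ^ β * p (t - u)) volume a b :=
    fun t a b => (hrpow_int a b).mul_continuousOn
      ((hp_cont.comp (continuous_const.sub continuous_id)).continuousOn)
  -- substitution u = t - s
  have hsub : ∀ t : ℝ, (∫ s in (0:ℝ)..t, (t - s) ^ β * g s)
      = ∫ u in (0:ℝ)..t, u ^ β * g (t - u) := by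
    intro t
    have h1 : (∫ s in (0:ℝ)..t, (fun u => u ^ β * g (t - u)) (t - s))
        = ∫ u in (t - t)..(t - 0), u ^ β * g (t - u) :=
      intervalIntegral.integral_comp_sub_left (fun u => u ^ β * g (t - u)) t
    simp only [sub_self, sub_zero] at h1
    rw [← h1]
    apply intervalIntegral.integral_congr
    intro s _
    simp [sub_sub_cancel]
  -- pointwise abs bound helper
  have habs_bound : ∀ (q : ℝ → ℝ) (Cq : ℝ), (∀ s, |q s| ≤ Cq) →
      ∀ (e u x : ℝ), 0 < u → |u ^ e * q (x - u)| ≤ u ^ e * Cq := by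
    intro q Cq hq e u x hu
    rw [abs_mul, abs_of_nonneg (Real.rpow_nonneg hu.le e)]
    exact mul_le_mul_of_nonneg_left (hq _) (Real.rpow_nonneg hu.le e)
  -- bound on ∫₀¹ u^β p(t-u)
  have hpiece1 : ∀ t : ℝ, |∫ u in (0:ℝ)..1, u ^ β * p (t - u)| ≤ Cp / (β + 1) := by
    intro t
    have hg_int : IntervalIntegrable (fun u : ℝ => u ^ β * Cp) volume 0 1 :=
      (hrpow_int 0 1).mul_const Cp
    have hb : ∀ᵐ u ∂(volume.restrict (Set.uIoc (0:ℝ) 1)), ‖u ^ β * p (t - u)‖ ≤ u ^ β * Cp := by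
      rw [Set.uIoc_of_le (zero_le_one), MeasureTheory.ae_restrict_iff' measurableSet_Ioc]
      refine Filter.Eventually.of_forall fun u hu => ?_
      rw [Real.norm_eq_abs]
      exact habs_bound p Cp hCp β u t hu.1
    have key := intervalIntegral.norm_integral_le_of_norm_le zero_le_one
      ((MeasureTheory.ae_restrict_iff' measurableSet_Ioc).1
        (by rwa [Set.uIoc_of_le zero_le_one] at hb)) hg_int
    rw [Real.norm_eq_abs] at key
    refine key.trans ?_
    rw [intervalIntegral.integral_mul_const, integral_rpow (Or.inl hβ0),
      Real.one_rpow, Real.zero_rpow (ne_of_gt hβ1)]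
    have heq2 : (1 - (0:ℝ)) / (β + 1) * Cp = Cp / (β + 1) := by ring
    rw [heq2]
  -- integration by parts on [1, t]
  have hIBP : ∀ t : ℝ, 1 ≤ t →
      (∫ x in (1:ℝ)..t, x ^ β * p (t - x))
        = t ^ β * (-(P 0)) + P (t - 1) + β * ∫ x in (1:ℝ)..t, x ^ (β - 1) * P (t - x) := by
    intro t ht
    have huIcc : Set.uIcc (1:ℝ) t = Set.Icc 1 t := Set.uIcc_of_le ht
    have hpos : ∀ x ∈ Set.uIcc (1:ℝ) t, (0:ℝ) < x := by
      intro x hx; rw [huIcc] at hx; linarith [hx.1]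
    have hu : ∀ x ∈ Set.uIcc (1:ℝ) t, HasDerivAt (fun x : ℝ => x ^ β) (β * x ^ (β - 1)) x :=
      fun x hx => Real.hasDerivAt_rpow_const (Or.inl (hpos x hx).ne')
    have hv : ∀ x ∈ Set.uIcc (1:ℝ) t, HasDerivAt (fun x => -(P (t - x))) (p (t - x)) x := by
      intro x _
      have h1 : HasDerivAt (fun x : ℝ => t - x) (-1) x := by
        simpa using (hasDerivAt_id x).const_sub t
      have h2 : HasDerivAt (fun x => -(P (t - x))) (-(p (t - x) * -1)) x :=
        ((hP_deriv (t - x)).comp x h1).fun_neg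
      convert h2 using 1
      ring
    have hcont_pow : ContinuousOn (fun x : ℝ => x ^ (β - 1)) (Set.uIcc (1:ℝ) t) :=
      ContinuousOn.rpow_const continuousOn_id fun x hx => Or.inl (hpos x hx).ne'
    have hu' : IntervalIntegrable (fun x => β * x ^ (β - 1)) volume 1 t :=
      (continuousOn_const.mul hcont_pow).intervalIntegrable
    have hv' : IntervalIntegrable (fun x => p (t - x)) volume 1 t :=
      (hp_cont.comp (continuous_const.sub continuous_id)).intervalIntegrable 1 t
    have hparts := intervalIntegral.integral_mul_deriv_eq_deriv_mul hu hv hu' hv'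
    rw [hparts, sub_self, Real.one_rpow]
    have h3 : (∫ x in (1:ℝ)..t, (β * x ^ (β - 1)) * (-(P (t - x))))
        = -(β * ∫ x in (1:ℝ)..t, x ^ (β - 1) * P (t - x)) := by
      rw [← intervalIntegral.integral_const_mul, ← intervalIntegral.integral_neg]
      apply intervalIntegral.integral_congr
      intro x _; ring
    rw [h3]; ring
  -- bound on ∫₁ᵗ x^(β-1) P(t-x)
  have hbound2 : ∀ t : ℝ, 1 ≤ t →
      |∫ x in (1:ℝ)..t, x ^ (β - 1) * P (t - x)| ≤ C / (-β) := by
    intro t ht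
    have hpos : ∀ x ∈ Set.uIcc (1:ℝ) t, (0:ℝ) < x := by
      intro x hx; rw [Set.uIcc_of_le ht] at hx; linarith [hx.1]
    have hcont_pow : ContinuousOn (fun x : ℝ => x ^ (β - 1)) (Set.uIcc (1:ℝ) t) :=
      ContinuousOn.rpow_const continuousOn_id fun x hx => Or.inl (hpos x hx).ne'
    have hg_int : IntervalIntegrable (fun x : ℝ => x ^ (β - 1) * C) volume 1 t :=
      (hcont_pow.mul continuousOn_const).intervalIntegrable
    have hb : ∀ᵐ x ∂(volume.restrict (Set.uIoc (1:ℝ) t)), ‖x ^ (β - 1) * P (t - x)‖ ≤ x ^ (β - 1) * C := by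
      rw [Set.uIoc_of_le ht, MeasureTheory.ae_restrict_iff' measurableSet_Ioc]
      refine Filter.Eventually.of_forall fun x hx => ?_
      rw [Real.norm_eq_abs]
      exact habs_bound P C hC (β - 1) x t (lt_trans zero_lt_one hx.1)
    have key := intervalIntegral.norm_integral_le_of_norm_le ht
      ((MeasureTheory.ae_restrict_iff' measurableSet_Ioc).1
        (by rwa [Set.uIoc_of_le ht] at hb)) hg_int
    rw [Real.norm_eq_abs] at key
    refine key.trans ?_
    have hzero : (0:ℝ) ∉ Set.uIcc (1:ℝ) t := by
      rw [Set.uIcc_of_le ht]; rintro ⟨h0, -⟩; linarith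
    rw [intervalIntegral.integral_mul_const,
      integral_rpow (Or.inr ⟨by intro h; exact hβneg.ne (by linarith), hzero⟩)]
    have heq : β - 1 + 1 = β := by ring
    rw [heq, Real.one_rpow]
    have htβ0 : 0 ≤ t ^ β := Real.rpow_nonneg (by linarith) β
    have htβ1 : t ^ β ≤ 1 := Real.rpow_le_one_of_one_le_of_nonpos ht hβneg.le
    have hval : (t ^ β - 1) / β * C = (1 - t ^ β) / (-β) * C := by
      rw [show (1 - t ^ β) = -(t ^ β - 1) by ring, neg_div_neg_eq]
    rw [hval]
    rw [div_mul_eq_mul_div, div_le_div_iff₀ (by linarith : (0:ℝ) < -β)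
      (by linarith : (0:ℝ) < -β)]
    nlinarith [mul_nonneg (mul_nonneg hC0 (by linarith : (0:ℝ) ≤ -β)) htβ0]
  -- the key uniform bound on J(t) = ∫₀ᵗ u^β p(t-u)
  have hJ : ∀ t : ℝ, 1 ≤ t →
      |∫ u in (0:ℝ)..t, u ^ β * p (t - u)| ≤ Cp / (β + 1) + 3 * C := by
    intro t ht
    have hsplit : (∫ u in (0:ℝ)..t, u ^ β * p (t - u))
        = (∫ u in (0:ℝ)..1, u ^ β * p (t - u)) + ∫ u in (1:ℝ)..t, u ^ β * p (t - u) :=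
      (intervalIntegral.integral_add_adjacent_intervals (hmix_int t 0 1) (hmix_int t 1 t)).symm
    rw [hsplit, hIBP t ht]
    have e1 := hpiece1 t
    have e2 : |t ^ β * (-(P 0))| ≤ C := by
      rw [abs_mul, abs_neg]
      have h1 : |t ^ β| ≤ 1 := by
        rw [abs_of_nonneg (Real.rpow_nonneg (by linarith) β)]
        exact Real.rpow_le_one_of_one_le_of_nonpos ht hβneg.le
      calc |t ^ β| * |P 0| ≤ 1 * C := mul_le_mul h1 (hC 0) (abs_nonneg _) one_pos.le
        _ = C := one_mul C
    have e3 : |P (t - 1)| ≤ C := hC _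
    have e4 : |β * ∫ x in (1:ℝ)..t, x ^ (β - 1) * P (t - x)| ≤ C := by
      rw [abs_mul, abs_of_neg hβneg]
      have h1 := hbound2 t ht
      have h2 : (-β) * |∫ x in (1:ℝ)..t, x ^ (β - 1) * P (t - x)| ≤ (-β) * (C / (-β)) :=
        mul_le_mul_of_nonneg_left h1 (by linarith)
      have h3 : (-β) * (C / (-β)) = C := by field_simp
      exact h2.trans (le_of_eq h3)
    calc |(∫ u in (0:ℝ)..1, u ^ β * p (t - u))
          + (t ^ β * (-(P 0)) + P (t - 1) + β * ∫ x in (1:ℝ)..t, x ^ (β - 1) * P (t - x))|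
        ≤ |∫ u in (0:ℝ)..1, u ^ β * p (t - u)|
          + |t ^ β * (-(P 0)) + P (t - 1) + β * ∫ x in (1:ℝ)..t, x ^ (β - 1) * P (t - x)| :=
          abs_add_le _ _
      _ ≤ |∫ u in (0:ℝ)..1, u ^ β * p (t - u)| + (|t ^ β * (-(P 0)) + P (t - 1)|
          + |β * ∫ x in (1:ℝ)..t, x ^ (β - 1) * P (t - x)|) := by
          have := abs_add_le (t ^ β * (-(P 0)) + P (t - 1))
            (β * ∫ x in (1:ℝ)..t, x ^ (β - 1) * P (t - x))
          linarith
      _ ≤ Cp / (β + 1) + 3 * C := by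
          have h5 := abs_add_le (t ^ β * (-(P 0))) (P (t - 1))
          linarith
  -- the main formula for cD
  have hcD' : ∀ t : ℝ, γ * cD t
      = m * (t ^ (β + 1) / (β + 1)) + ∫ u in (0:ℝ)..t, u ^ β * p (t - u) := by
    intro t
    rw [hcD t, hsub t]
    have hadd : (∫ u in (0:ℝ)..t, u ^ β * g (t - u))
        = (∫ u in (0:ℝ)..t, u ^ β * m) + ∫ u in (0:ℝ)..t, u ^ β * p (t - u) := by
      rw [← intervalIntegral.integral_add ((hrpow_int 0 t).mul_const m) (hmix_int t 0 t)]
      apply intervalIntegral.integral_congr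
      intro u _
      simp only [hpdef]
      ring
    rw [hadd]
    have hpow : (∫ u in (0:ℝ)..t, u ^ β * m) = m * (t ^ (β + 1) / (β + 1)) := by
      rw [intervalIntegral.integral_mul_const, integral_rpow (Or.inl hβ0),
        Real.zero_rpow (ne_of_gt hβ1)]
      ring
    rw [hpow]
    field_simp
  -- Step A: the mean m is zero
  have hm0 : m = 0 := by
    by_contra hm
    have hmabs : 0 < |m| := abs_pos.2 hm
    have hMnn : 0 ≤ M := le_trans (abs_nonneg _) (hM 1 (by norm_num))
    set K : ℝ := Cp / (β + 1) + 3 * C with hKdef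
    have key : ∀ t : ℝ, 1 ≤ t → |m| * t ^ (β + 1) ≤ (β + 1) * (γ * M + K) := by
      intro t ht
      have h1 := hcD' t
      have h2 : m * (t ^ (β + 1) / (β + 1))
          = γ * cD t - ∫ u in (0:ℝ)..t, u ^ β * p (t - u) := by rw [h1]; ring
      have h3 : |m * (t ^ (β + 1) / (β + 1))|
          ≤ |γ * cD t| + |∫ u in (0:ℝ)..t, u ^ β * p (t - u)| := by
        rw [h2, sub_eq_add_neg]
        refine (abs_add_le _ _).trans ?_
        rw [abs_neg]
      have h4 : |γ * cD t| ≤ γ * M := by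
        rw [abs_mul, abs_of_pos hγ]
        exact mul_le_mul_of_nonneg_left (hM t (by simp; linarith)) hγ.le
      have h5 := hJ t ht
      have h6 : |m * (t ^ (β + 1) / (β + 1))| = |m| * t ^ (β + 1) / (β + 1) := by
        rw [abs_mul, abs_of_nonneg (by positivity : (0:ℝ) ≤ t ^ (β + 1) / (β + 1))]
        ring
      rw [h6] at h3
      rw [div_le_iff₀ hβ1] at h3
      calc |m| * t ^ (β + 1) ≤ (γ * M + K) * (β + 1) := by
            refine le_trans h3 ?_
            exact mul_le_mul_of_nonneg_right (by linarith) hβ1.le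
        _ = (β + 1) * (γ * M + K) := mul_comm _ _
    obtain ⟨t, ht1, ht2⟩ : ∃ t : ℝ, 1 ≤ t
        ∧ ((β + 1) * (γ * M + K) + 1) / |m| ≤ t ^ (β + 1) := by
      have h := (tendsto_rpow_atTop hβ1).eventually_ge_atTop
        (((β + 1) * (γ * M + K) + 1) / |m|)
      obtain ⟨t, h3, h4⟩ := (h.and (eventually_ge_atTop (1:ℝ))).exists
      exact ⟨t, h4, h3⟩
    have hkey := key t ht1
    rw [div_le_iff₀ hmabs] at ht2
    nlinarith
  -- with m = 0 the integrand is p = g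
  -- integrability on Ioi
  have hIoiInt : ∀ t : ℝ,
      MeasureTheory.IntegrableOn (fun u => u ^ (β - 1) * P (t - u)) (Set.Ioi (1:ℝ)) := by
    intro t
    have hcont : ContinuousOn (fun u : ℝ => u ^ (β - 1) * P (t - u)) (Set.Ioi (1:ℝ)) := by
      apply ContinuousOn.mul
      · exact ContinuousOn.rpow_const continuousOn_id fun x hx =>
          Or.inl (by have : (1:ℝ) < x := hx; positivity)
      · exact (hP_cont.comp (continuous_const.sub continuous_id)).continuousOn
    refine MeasureTheory.Integrable.mono'
      ((integrableOn_Ioi_rpow_of_lt (a := β - 1) (by linarith) zero_lt_one).mul_const C)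
      (hcont.aestronglyMeasurable measurableSet_Ioi) ?_
    rw [MeasureTheory.ae_restrict_iff' measurableSet_Ioi]
    refine Filter.Eventually.of_forall fun u hu => ?_
    rw [Real.norm_eq_abs]
    exact habs_bound P C hC (β - 1) u t (lt_trans zero_lt_one hu)
  -- define Φ
  set Φ : ℝ → ℝ := fun t => (1/γ) * ((∫ u in (0:ℝ)..1, u ^ β * p (t - u)) + P (t - 1)
      + β * ∫ u in Set.Ioi (1:ℝ), u ^ (β - 1) * P (t - u)) with hΦdef
  refine ⟨Φ, ?_, ?_, ?_⟩
  · -- continuity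
    rw [hΦdef]
    apply Continuous.mul continuous_const
    apply Continuous.add
    apply Continuous.add
    · -- continuity of t ↦ ∫₀¹ u^β p(t-u)
      have heq : (fun t : ℝ => ∫ u in (0:ℝ)..1, u ^ β * p (t - u))
          = fun t : ℝ => ∫ u in Set.Ioc (0:ℝ) 1, u ^ β * p (t - u) :=
        funext fun t => intervalIntegral.integral_of_le zero_le_one
      rw [heq]
      apply MeasureTheory.continuous_of_dominated (bound := fun u : ℝ => u ^ β * Cp)
      · intro t
        refine ContinuousOn.aestronglyMeasurable ?_ measurableSet_Ioc
        apply ContinuousOn.mul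
        · exact ContinuousOn.rpow_const continuousOn_id fun x hx => Or.inl (ne_of_gt hx.1)
        · exact (hp_cont.comp (continuous_const.sub continuous_id)).continuousOn
      · intro t
        rw [MeasureTheory.ae_restrict_iff' measurableSet_Ioc]
        refine Filter.Eventually.of_forall fun u hu => ?_
        rw [Real.norm_eq_abs]
        exact habs_bound p Cp hCp β u t hu.1
      · exact ((hrpow_int 0 1).mul_const Cp).1
      · refine Filter.Eventually.of_forall fun u => ?_
        exact continuous_const.mul (hp_cont.comp (continuous_id.sub continuous_const))
    · exact hP_cont.comp (continuous_id.sub continuous_const)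
    · apply Continuous.mul continuous_const
      apply MeasureTheory.continuous_of_dominated (bound := fun u : ℝ => u ^ (β - 1) * C)
      · intro t
        refine ContinuousOn.aestronglyMeasurable ?_ measurableSet_Ioi
        apply ContinuousOn.mul
        · exact ContinuousOn.rpow_const continuousOn_id fun x hx =>
            Or.inl (by have : (1:ℝ) < x := hx; positivity)
        · exact (hP_cont.comp (continuous_const.sub continuous_id)).continuousOn
      · intro t
        rw [MeasureTheory.ae_restrict_iff' measurableSet_Ioi]
        refine Filter.Eventually.of_forall fun u hu => ?_
        rw [Real.norm_eq_abs]
        exact habs_bound P C hC (β - 1) u t (lt_trans zero_lt_one hu)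
      · exact (integrableOn_Ioi_rpow_of_lt (by linarith) zero_lt_one).mul_const C
      · refine Filter.Eventually.of_forall fun u => ?_
        exact continuous_const.mul (hP_cont.comp (continuous_id.sub continuous_const))
  · -- periodicity
    intro t
    simp only [hΦdef]
    have e1 : (∫ u in (0:ℝ)..1, u ^ β * p (t + T - u)) = ∫ u in (0:ℝ)..1, u ^ β * p (t - u) := by
      apply intervalIntegral.integral_congr
      intro u _
      simp only
      rw [show t + T - u = (t - u) + T by ring, hp_per]
    have e2 : P (t + T - 1) = P (t - 1) := by
      rw [show t + T - 1 = (t - 1) + T by ring, hP_per]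
    have e3 : (∫ u in Set.Ioi (1:ℝ), u ^ (β - 1) * P (t + T - u))
        = ∫ u in Set.Ioi (1:ℝ), u ^ (β - 1) * P (t - u) :=
      MeasureTheory.integral_congr_ae (Filter.Eventually.of_forall fun u => by
        simp only
        rw [show t + T - u = (t - u) + T by ring, hP_per])
    rw [e1, e2, e3]
  · -- the limit
    have hdiff : ∀ t : ℝ, 1 ≤ t → cD t - Φ t
        = (1/γ) * (t ^ β * (-(P 0)) - β * ∫ u in Set.Ioi t, u ^ (β - 1) * P (t - u)) := by
      intro t ht
      have h1 : γ * cD t = ∫ u in (0:ℝ)..t, u ^ β * p (t - u) := by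
        rw [hcD' t, hm0]; ring
      have hsplit : (∫ u in (0:ℝ)..t, u ^ β * p (t - u))
          = (∫ u in (0:ℝ)..1, u ^ β * p (t - u)) + ∫ u in (1:ℝ)..t, u ^ β * p (t - u) :=
        (intervalIntegral.integral_add_adjacent_intervals (hmix_int t 0 1) (hmix_int t 1 t)).symm
      have hIoi : (∫ u in Set.Ioi (1:ℝ), u ^ (β - 1) * P (t - u))
          = (∫ u in (1:ℝ)..t, u ^ (β - 1) * P (t - u))
            + ∫ u in Set.Ioi t, u ^ (β - 1) * P (t - u) := by
        rw [intervalIntegral.integral_of_le ht,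
          ← MeasureTheory.setIntegral_union (Set.Ioc_disjoint_Ioi le_rfl) measurableSet_Ioi
            ((hIoiInt t).mono_set Set.Ioc_subset_Ioi_self)
            ((hIoiInt t).mono_set (Set.Ioi_subset_Ioi ht)),
          Set.Ioc_union_Ioi_eq_Ioi ht]
      have hcDt : cD t = (1/γ) * ((∫ u in (0:ℝ)..1, u ^ β * p (t - u))
          + (t ^ β * (-(P 0)) + P (t - 1)
            + β * ∫ x in (1:ℝ)..t, x ^ (β - 1) * P (t - x))) := by
        rw [← hIBP t ht, ← hsplit, ← h1]
        field_simp
      rw [hcDt]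
      simp only [hΦdef]
      rw [hIoi]
      ring
    have hbound : ∀ t : ℝ, 1 ≤ t → ‖cD t - Φ t‖ ≤ (1/γ) * (C + C) * t ^ β := by
      intro t ht
      have ht0 : (0:ℝ) < t := lt_of_lt_of_le zero_lt_one ht
      rw [Real.norm_eq_abs, hdiff t ht]
      have htβ0 : 0 ≤ t ^ β := Real.rpow_nonneg ht0.le β
      have h2 : |∫ u in Set.Ioi t, u ^ (β - 1) * P (t - u)| ≤ -t ^ β / β * C := by
        have hInt : MeasureTheory.IntegrableOn (fun u : ℝ => u ^ (β - 1) * C) (Set.Ioi t) :=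
          (integrableOn_Ioi_rpow_of_lt (by linarith) ht0).mul_const C
        have hb : ∀ᵐ u ∂(volume.restrict (Set.Ioi t)),
            ‖u ^ (β - 1) * P (t - u)‖ ≤ u ^ (β - 1) * C := by
          rw [MeasureTheory.ae_restrict_iff' measurableSet_Ioi]
          refine Filter.Eventually.of_forall fun u hu => ?_
          rw [Real.norm_eq_abs]
          exact habs_bound P C hC (β - 1) u t (lt_trans ht0 hu)
        have key := MeasureTheory.norm_integral_le_of_norm_le hInt hb
        rw [Real.norm_eq_abs] at key
        refine key.trans ?_
        rw [MeasureTheory.integral_mul_const, integral_Ioi_rpow_of_lt (by linarith) ht0]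
        rw [show β - 1 + 1 = β by ring]
      have h3 : |t ^ β * (-(P 0))| ≤ t ^ β * C := by
        rw [abs_mul, abs_neg, abs_of_nonneg htβ0]
        exact mul_le_mul_of_nonneg_left (hC 0) htβ0
      have h4 : |β * ∫ u in Set.Ioi t, u ^ (β - 1) * P (t - u)| ≤ C * t ^ β := by
        rw [abs_mul, abs_of_neg hβneg]
        have h5 : (-β) * |∫ u in Set.Ioi t, u ^ (β - 1) * P (t - u)|
            ≤ (-β) * (-t ^ β / β * C) := mul_le_mul_of_nonneg_left h2 (by linarith)
        have h6 : (-β) * (-t ^ β / β * C) = C * t ^ β := by field_simp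
        exact h5.trans (le_of_eq h6)
      rw [abs_mul, abs_of_pos (by positivity : (0:ℝ) < 1/γ)]
      have h7 : |t ^ β * (-(P 0)) - β * ∫ u in Set.Ioi t, u ^ (β - 1) * P (t - u)|
          ≤ t ^ β * C + C * t ^ β := by
        refine le_trans (abs_sub _ _) ?_
        linarith
      calc (1/γ) * |t ^ β * (-(P 0)) - β * ∫ u in Set.Ioi t, u ^ (β - 1) * P (t - u)|
          ≤ (1/γ) * (t ^ β * C + C * t ^ β) :=
            mul_le_mul_of_nonneg_left h7 (by positivity)
        _ = (1/γ) * (C + C) * t ^ β := by ring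
    have hlim : Tendsto (fun t : ℝ => (1/γ) * (C + C) * t ^ β) atTop (nhds 0) := by
      have h := tendsto_rpow_neg_atTop (show (0:ℝ) < -β by linarith)
      simp only [neg_neg] at h
      have h2 := h.const_mul ((1/γ) * (C + C))
      simpa using h2
    exact squeeze_zero_norm' (Filter.eventually_atTop.2 ⟨1, fun t ht => hbound t ht⟩) hlim
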